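/- arXiv:2212.10959 — 3 statements merged into one kernel-verified Lean document; each statement's English description precedes it below -/
import Mathlib

section
/- Under causal consistency (A1) and conditional exchangeability (A2), for every treatment value a ∈ α the conditional expectation of the observed outcome times the treatment indicator factorizes as E[Y·1_{A=a} | m] = E[Y_pot(a) | m] · P(A = a | m), μ-almost everywhere. (This is the key identification step in the proof of Lemma 1.) -/
open MeasureTheory ProbabilityTheory Set MeasurableSpace

lemma aux_indep_integral {Ω : Type*} {mΩ : MeasurableSpace Ω}
    (ν : Measure Ω) [IsProbabilityMeasure ν]
    (f : Ω → ℝ) (hf : Measurable f) (B : Set Ω) (hB : MeasurableSet B)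
    (h : ∀ q : ℚ, ν (f ⁻¹' Iic (q : ℝ) ∩ B) = ν (f ⁻¹' Iic (q : ℝ)) * ν B) :
    ∫ x, f x * B.indicator (fun _ => (1:ℝ)) x ∂ν
      = (∫ x, f x ∂ν) * (ν B).toReal := by
  have hgen : (MeasurableSpace.comap f (inferInstance : MeasurableSpace ℝ))
      = generateFrom ((f ⁻¹' ·) '' (⋃ q : ℚ, {Iic (q : ℝ)})) := by
    rw [show (inferInstance : MeasurableSpace ℝ) = borel ℝ from BorelSpace.measurable_eq,
      Real.borel_eq_generateFrom_Iic_rat, comap_generateFrom]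
  have hpi1 : IsPiSystem ((f ⁻¹' ·) '' (⋃ q : ℚ, {Iic (q : ℝ)})) :=
    IsPiSystem.comap Real.isPiSystem_Iic_rat f
  have hindepsets : IndepSets ((f ⁻¹' ·) '' (⋃ q : ℚ, {Iic (q : ℝ)})) {B} ν := by
    rintro t1 t2 ⟨s, hs, rfl⟩ ht2
    simp only [Set.mem_iUnion, Set.mem_singleton_iff] at hs ht2
    obtain ⟨q, rfl⟩ := hs
    subst ht2
    refine Filter.Eventually.of_forall fun _ => ?_
    simpa using h q
  have hindep : Indep (MeasurableSpace.comap f (inferInstance : MeasurableSpace ℝ))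
      (generateFrom {B}) ν :=
    IndepSets.indep hf.comap_le (generateFrom_le (by simpa using hB)) hpi1
      (IsPiSystem.singleton B) hgen rfl hindepsets
  have hχ : Measurable[generateFrom {B}] (B.indicator (fun _ => (1:ℝ))) :=
    measurable_const.indicator (measurableSet_generateFrom rfl)
  have hIF : IndepFun f (B.indicator (fun _ => (1:ℝ))) ν :=
    indep_of_indep_of_le_right hindep hχ.comap_le
  have h1 := hIF.integral_fun_mul_eq_mul_integral hf.aestronglyMeasurable
    ((measurable_const.indicator hB)).aestronglyMeasurable
  have h2 : ∫ x, B.indicator (fun _ => (1:ℝ)) x ∂ν = (ν B).toReal := by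
    exact integral_indicator_one (μ := ν) hB
  rw [h1, ← h2]

/-- (Key identification step in the proof of Lemma 1.)
Under causal consistency (A1) and conditional exchangeability (A2), for every
treatment value `a`, the conditional expectation of the observed outcome times
the treatment indicator factorizes as
`E[Y·1_{A=a} | m] = E[Y_pot(a) | m] · P(A = a | m)`, `μ`-almost everywhere. -/
theorem stmt0 {Ω : Type*} {mΩ : MeasurableSpace Ω} [StandardBorelSpace Ω] [Nonempty Ω]
    (μ : Measure Ω) [IsProbabilityMeasure μ]
    (m : MeasurableSpace Ω) (hm : m ≤ mΩ)
    {α : Type*} [Fintype α] [DecidableEq α] [MeasurableSpace α] [MeasurableSingletonClass α]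
    (A : Ω → α) (hA : Measurable[mΩ] A)
    (Ypot : α → Ω → ℝ) (hYpot_meas : ∀ a, Measurable[mΩ] (Ypot a))
    (C : ℝ) (hYpot_bdd : ∀ a ω, |Ypot a ω| ≤ C)
    (Y : Ω → ℝ)
    (hA1 : ∀ᵐ ω ∂μ, Y ω = Ypot (A ω) ω)
    (hA2 : ∀ a : α, CondIndepFun m hm (Ypot a) A μ) :
    ∀ a : α,
      (μ[fun ω => Y ω * (if A ω = a then (1:ℝ) else 0)|m])
        =ᵐ[μ]
      fun ω => (μ[Ypot a|m]) ω * (μ[fun ω' => (if A ω' = a then (1:ℝ) else 0)|m]) ω := by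
  intro a
  set B : Set Ω := A ⁻¹' {a} with hBdef
  have hB : MeasurableSet[mΩ] B := hA (measurableSet_singleton a)
  set χ : Ω → ℝ := B.indicator (fun _ => (1:ℝ)) with hχdef
  have hχfun : (fun ω => if A ω = a then (1:ℝ) else 0) = χ := by
    funext ω
    by_cases h : A ω = a <;> simp [hχdef, hBdef, Set.indicator_apply, h]
  have hχmeas : Measurable[mΩ] χ := by
    rw [hχdef]; exact measurable_const.indicator hB
  have hf_int : Integrable (Ypot a) μ := by
    refine Integrable.mono' (integrable_const C) (hYpot_meas a).aestronglyMeasurable ?_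
    exact Filter.Eventually.of_forall fun ω => by simpa using hYpot_bdd a ω
  have hfχ_int : Integrable (fun ω => Ypot a ω * χ ω) μ := by
    refine Integrable.mono' (integrable_const C) ((hYpot_meas a).mul hχmeas).aestronglyMeasurable ?_
    refine Filter.Eventually.of_forall fun ω => ?_
    have h0 : |χ ω| ≤ 1 := by
      by_cases h : ω ∈ B <;> simp [hχdef, Set.indicator_apply, h]
    have := mul_le_mul (hYpot_bdd a ω) h0 (abs_nonneg _) ((abs_nonneg _).trans (hYpot_bdd a ω))
    simpa [Real.norm_eq_abs, abs_mul] using this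
  have hstep1 : (fun ω => Y ω * (if A ω = a then (1:ℝ) else 0))
      =ᵐ[μ] fun ω => Ypot a ω * χ ω := by
    filter_upwards [hA1] with ω hω
    by_cases h : A ω = a
    · have h2 : Ypot (A ω) ω = Ypot a ω := by rw [h]
      simp [hχdef, hBdef, Set.indicator_apply, h, hω, h2]
    · simp [hχdef, hBdef, Set.indicator_apply, h]
  have hker : ∀ᵐ ω ∂μ, ∀ q : ℚ,
      condExpKernel (mΩ := mΩ) μ m ω ((Ypot a) ⁻¹' Iic (q : ℝ) ∩ B)
        = condExpKernel (mΩ := mΩ) μ m ω ((Ypot a) ⁻¹' Iic (q : ℝ))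
          * condExpKernel (mΩ := mΩ) μ m ω B := by
    refine ae_of_ae_trim hm (ae_all_iff.2 fun q => ?_)
    exact (hA2 a) ((Ypot a) ⁻¹' Iic (q : ℝ)) B
      ⟨Iic (q : ℝ), measurableSet_Iic, rfl⟩ ⟨{a}, measurableSet_singleton a, rfl⟩
  have hrep1 : μ[fun ω => Ypot a ω * χ ω|m]
      =ᵐ[μ] fun ω => ∫ y, Ypot a y * χ y ∂(condExpKernel (mΩ := mΩ) μ m ω) :=
    condExp_ae_eq_integral_condExpKernel (mΩ := mΩ) hm hfχ_int
  have hrep2 : μ[Ypot a|m] =ᵐ[μ] fun ω => ∫ y, Ypot a y ∂(condExpKernel (mΩ := mΩ) μ m ω) :=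
    condExp_ae_eq_integral_condExpKernel (mΩ := mΩ) hm hf_int
  have hrep3 : (fun ω => ((condExpKernel (mΩ := mΩ) μ m ω) B).toReal) =ᵐ[μ] μ[χ|m] :=
    condExpKernel_ae_eq_condExp (mΩ := mΩ) hm hB
  calc μ[fun ω => Y ω * (if A ω = a then (1:ℝ) else 0)|m]
      =ᵐ[μ] μ[fun ω => Ypot a ω * χ ω|m] := condExp_congr_ae hstep1
    _ =ᵐ[μ] fun ω => (μ[Ypot a|m]) ω * (μ[χ|m]) ω := by
        filter_upwards [hrep1, hrep2, hrep3, hker] with ω h1 h2 h3 hk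
        rw [h1, h2, ← h3, hχdef]
        exact aux_indep_integral (condExpKernel (mΩ := mΩ) μ m ω) (Ypot a)
          (hYpot_meas a) B hB hk
    _ =ᵐ[μ] fun ω => (μ[Ypot a|m]) ω * (μ[fun ω' => (if A ω' = a then (1:ℝ) else 0)|m]) ω := by
        rw [hχfun]
end

section
/- (Lemma 1, identifiability.) Under causal consistency (A1), conditional exchangeability (A2), and positivity (A3), for any bounded m-measurable weight functions w(a) : Ω → ℝ (a ∈ α), the counterfactual functional is identified from the observed-data distribution: E[∑_{a∈α} w(a)·Y_pot(a)] = E[∑_{a∈α} w(a) · E[Y·1_{A=a} | m] / P(A = a | m)]. -/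
open MeasureTheory ProbabilityTheory

open Filter
section AuxHelpers


section Aux

variable {Ω : Type*} {mΩ : MeasurableSpace Ω} {μ : Measure Ω}

lemma int_of_bdd [IsFiniteMeasure μ] {u : Ω → ℝ} (hu : AEStronglyMeasurable u μ)
    {b : ℝ} (hb : ∀ ω, |u ω| ≤ b) : Integrable u μ :=
  (integrable_const b).mono' hu (Eventually.of_forall fun ω => by
    simpa [Real.norm_eq_abs] using hb ω)

lemma abs_mul_le' {x y b d : ℝ} (hx : |x| ≤ b) (hy : |y| ≤ d) : |x * y| ≤ b * d := by
  rw [abs_mul]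
  exact mul_le_mul hx hy (abs_nonneg _) (le_trans (abs_nonneg _) hx)

lemma abs_condexp_le [IsProbabilityMeasure μ] {m : MeasurableSpace Ω} (hm : m ≤ mΩ)
    {u : Ω → ℝ} (hu : Integrable u μ) {b : ℝ} (hb : ∀ ω, |u ω| ≤ b) :
    ∀ᵐ ω ∂μ, |(μ[u|m]) ω| ≤ b := by
  have h1 : μ[u|m] ≤ᵐ[μ] μ[fun _ => b|m] :=
    condExp_mono hu (integrable_const b) (Eventually.of_forall fun ω => (abs_le.mp (hb ω)).2)
  have h2 : μ[fun _ => -b|m] ≤ᵐ[μ] μ[u|m] :=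
    condExp_mono (integrable_const (-b)) hu (Eventually.of_forall fun ω => (abs_le.mp (hb ω)).1)
  rw [condExp_const hm] at h1
  rw [condExp_const hm] at h2
  filter_upwards [h1, h2] with ω e1 e2
  exact abs_le.mpr ⟨e2, e1⟩

/-- Key factorization: conditional independence implies the conditional expectation
of a bounded function times an indicator factorizes. -/
lemma condexp_mul_indicator_factor [StandardBorelSpace Ω] [Nonempty Ω]
    [IsProbabilityMeasure μ]
    (m : MeasurableSpace Ω) (hm : m ≤ mΩ)
    {α : Type*} [MeasurableSpace α] [MeasurableSingletonClass α]
    (A : Ω → α) (hA : Measurable[mΩ] A)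
    (f : Ω → ℝ) (hf : Measurable[mΩ] f) (C : ℝ) (hfb : ∀ ω, |f ω| ≤ C)
    (hind : CondIndepFun m hm f A μ) (a : α) :
    μ[fun ω => f ω * (A ⁻¹' {a}).indicator (fun _ => (1:ℝ)) ω|m]
      =ᵐ[μ] fun ω => (μ[f|m]) ω * (μ[(A ⁻¹' {a}).indicator (fun _ => (1:ℝ))|m]) ω := by
  classical
  letI : MeasurableSpace Ω := mΩ
  set T : Set Ω := A ⁻¹' {a} with hTdef
  have hT : MeasurableSet T := hA (measurableSet_singleton a)
  set χ : Ω → ℝ := T.indicator (fun _ => (1:ℝ)) with hχdef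
  have hχmeas : Measurable χ := measurable_const.indicator hT
  have hχbd : ∀ ω, |χ ω| ≤ 1 := by
    intro ω
    by_cases h : A ω = a <;> simp [hχdef, hTdef, Set.indicator_apply, h]
  have hC0 : 0 ≤ C := le_trans (abs_nonneg _) (hfb (Classical.arbitrary Ω))
  set G : Ω → ℝ := μ[χ|m] with hGdef
  -- Step A: indicator case
  have h_base : ∀ s : Set ℝ, MeasurableSet s →
      μ[fun ω => (f ⁻¹' s).indicator (fun _ => (1:ℝ)) ω * χ ω|m]
        =ᵐ[μ] fun ω => (μ[(f ⁻¹' s).indicator (fun _ => (1:ℝ))|m]) ω * G ω := by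
    intro s hs
    have h := (condIndepFun_iff_condExp_inter_preimage_eq_mul (hm' := hm) (μ := μ)
      hf hA).mp hind s {a} hs (measurableSet_singleton a)
    have heq : (fun ω => (f ⁻¹' s).indicator (fun _ => (1:ℝ)) ω * χ ω)
        = (f ⁻¹' s ∩ T).indicator (fun _ => (1:ℝ)) := by
      funext ω
      by_cases h1 : f ω ∈ s <;> by_cases h2 : A ω = a <;>
        simp [Set.indicator_apply, h1, h2, hχdef, hTdef, Set.mem_inter_iff]
    rw [heq]
    exact h
  -- Step B: finite sums of indicator functions of preimages
  have h_sum : ∀ (K : Finset ℤ) (c : ℤ → ℝ) (s : ℤ → Set ℝ), (∀ k, MeasurableSet (s k)) →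
      μ[fun ω => (∑ k ∈ K, c k * (f ⁻¹' (s k)).indicator (fun _ => (1:ℝ)) ω) * χ ω|m]
        =ᵐ[μ] fun ω =>
          (μ[fun ω' => ∑ k ∈ K, c k * (f ⁻¹' (s k)).indicator (fun _ => (1:ℝ)) ω'|m]) ω * G ω := by
    intro K c s hs
    set ψ : ℤ → Ω → ℝ := fun k ω => (f ⁻¹' (s k)).indicator (fun _ => (1:ℝ)) ω with hψdef
    have hψmeas : ∀ k, Measurable (ψ k) := fun k => measurable_const.indicator (hf (hs k))
    have hψbd : ∀ k ω, |ψ k ω| ≤ 1 := by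
      intro k ω
      by_cases h : f ω ∈ s k <;> simp [hψdef, Set.indicator_apply, h]
    have hint : ∀ k, Integrable (fun ω => c k * (ψ k ω * χ ω)) μ := by
      intro k
      refine int_of_bdd (((hψmeas k).mul hχmeas).const_mul (c k)).aestronglyMeasurable
        (b := |c k|) fun ω => ?_
      have := abs_mul_le' (le_refl |c k|) (abs_mul_le' (hψbd k ω) (hχbd ω))
      simpa using this
    have hintψ : ∀ k, Integrable (fun ω => c k * ψ k ω) μ := by
      intro k
      refine int_of_bdd ((hψmeas k).const_mul (c k)).aestronglyMeasurable
        (b := |c k|) fun ω => ?_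
      have := abs_mul_le' (le_refl |c k|) (hψbd k ω)
      simpa using this
    -- per-term factorization
    have h_term : ∀ k, μ[fun ω => c k * (ψ k ω * χ ω)|m]
        =ᵐ[μ] fun ω => c k * ((μ[ψ k|m]) ω * G ω) := by
      intro k
      have e1 : (fun ω => c k * (ψ k ω * χ ω)) = c k • (fun ω => ψ k ω * χ ω) := by
        funext ω; simp [smul_eq_mul]
      have e2 := condExp_smul (μ := μ) (m := m) (c k) (fun ω => ψ k ω * χ ω)
      rw [← e1] at e2
      refine e2.trans ?_
      have e3 := h_base (s k) (hs k)
      filter_upwards [e3] with ω hω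
      simp only [Pi.smul_apply, smul_eq_mul]
      rw [hω]
    have h_termψ : ∀ k, μ[fun ω => c k * ψ k ω|m] =ᵐ[μ] fun ω => c k * (μ[ψ k|m]) ω := by
      intro k
      have e1 : (fun ω => c k * ψ k ω) = c k • ψ k := by
        funext ω; simp [smul_eq_mul]
      have e2 := condExp_smul (μ := μ) (m := m) (c k) (ψ k)
      rw [← e1] at e2
      refine e2.trans ?_
      filter_upwards with ω
      simp [smul_eq_mul]
    have hL : (fun ω => (∑ k ∈ K, c k * ψ k ω) * χ ω)
        = ∑ k ∈ K, (fun ω => c k * (ψ k ω * χ ω)) := by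
      funext ω
      simp only [Finset.sum_apply, Finset.sum_mul, mul_assoc]
    have hS1 : μ[fun ω => (∑ k ∈ K, c k * ψ k ω) * χ ω|m]
        =ᵐ[μ] ∑ k ∈ K, μ[fun ω => c k * (ψ k ω * χ ω)|m] := by
      rw [hL]
      exact condExp_finsetSum (fun k _ => hint k) m
    have hS2 : μ[fun ω' => ∑ k ∈ K, c k * ψ k ω'|m]
        =ᵐ[μ] ∑ k ∈ K, μ[fun ω => c k * ψ k ω|m] := by
      have hL2 : (fun ω' => ∑ k ∈ K, c k * ψ k ω') = ∑ k ∈ K, (fun ω => c k * ψ k ω) := by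
        funext ω; simp [Finset.sum_apply]
      rw [hL2]
      exact condExp_finsetSum (fun k _ => hintψ k) m
    have hterms : ∀ᵐ ω ∂μ, ∀ k ∈ K,
        (μ[fun ω' => c k * (ψ k ω' * χ ω')|m]) ω = c k * ((μ[ψ k|m]) ω * G ω) := by
      rw [eventually_all_finset]
      intro k _
      exact h_term k
    have htermsψ : ∀ᵐ ω ∂μ, ∀ k ∈ K,
        (μ[fun ω' => c k * ψ k ω'|m]) ω = c k * (μ[ψ k|m]) ω := by
      rw [eventually_all_finset]
      intro k _
      exact h_termψ k
    filter_upwards [hS1, hS2, hterms, htermsψ] with ω e1 e2 e3 e4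
    rw [e1]
    simp only [Finset.sum_apply]
    rw [Finset.sum_congr rfl e3, e2]
    simp only [Finset.sum_apply]
    rw [Finset.sum_congr rfl e4, Finset.sum_mul]
    exact Finset.sum_congr rfl fun k _ => by ring
  -- Step C: approximation
  have h_int_f : Integrable f μ := int_of_bdd hf.aestronglyMeasurable hfb
  have h_int_fχ : Integrable (fun ω => f ω * χ ω) μ := by
    refine int_of_bdd (hf.mul hχmeas).aestronglyMeasurable (b := C) fun ω => ?_
    have := abs_mul_le' (hfb ω) (hχbd ω)
    simpa using this
  have main : ∀ n : ℕ, ∀ᵐ ω ∂μ,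
      |(μ[fun ω' => f ω' * χ ω'|m]) ω - (μ[f|m]) ω * G ω| ≤ 2 / ((n : ℝ) + 1) := by
    intro n
    set N : ℝ := (n : ℝ) + 1 with hNdef
    have hN : (0:ℝ) < N := by positivity
    set K : Finset ℤ := Finset.Icc ⌊-(C * N)⌋ ⌊C * N⌋ with hKdef
    set s : ℤ → Set ℝ := fun k => (fun x => x * N) ⁻¹' (Set.Ico (k : ℝ) ((k : ℝ) + 1))
      with hsdef
    have hsmeas : ∀ k, MeasurableSet (s k) :=
      fun k => (measurable_id.mul_const N) measurableSet_Ico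
    set c : ℤ → ℝ := fun k => (k : ℝ) / N with hcdef
    set g : Ω → ℝ := fun ω => ∑ k ∈ K, c k * (f ⁻¹' (s k)).indicator (fun _ => (1:ℝ)) ω
      with hgdef
    have hψval : ∀ (k : ℤ) ω, (f ⁻¹' (s k)).indicator (fun _ => (1:ℝ)) ω
        = if ⌊f ω * N⌋ = k then (1:ℝ) else 0 := by
      intro k ω
      have hmemiff : ω ∈ f ⁻¹' (s k) ↔ ⌊f ω * N⌋ = k := by
        simp only [Set.mem_preimage, hsdef, Set.mem_Ico]
        rw [Int.floor_eq_iff]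
        try tauto
      by_cases h : ⌊f ω * N⌋ = k
      · rw [if_pos h]
        exact Set.indicator_of_mem (hmemiff.mpr h) _
      · rw [if_neg h]
        exact Set.indicator_of_notMem (fun hmem => h (hmemiff.mp hmem)) _
    have hgval : ∀ ω, g ω = (⌊f ω * N⌋ : ℝ) / N := by
      intro ω
      have hmem : ⌊f ω * N⌋ ∈ K := by
        rw [hKdef, Finset.mem_Icc]
        constructor
        · exact Int.floor_mono (by nlinarith [(abs_le.mp (hfb ω)).1])
        · exact Int.floor_mono (by nlinarith [(abs_le.mp (hfb ω)).2])
      rw [hgdef]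
      simp only [hψval, mul_ite, mul_one, mul_zero]
      rw [Finset.sum_ite_eq K (⌊f ω * N⌋) c, if_pos hmem]
    have hclose : ∀ ω, |f ω - g ω| ≤ 1 / N := by
      intro ω
      rw [hgval ω]
      have h1 : (⌊f ω * N⌋ : ℝ) ≤ f ω * N := Int.floor_le _
      have h2 : f ω * N < (⌊f ω * N⌋ : ℝ) + 1 := Int.lt_floor_add_one _
      have heq : f ω - (⌊f ω * N⌋ : ℝ) / N = (f ω * N - (⌊f ω * N⌋ : ℝ)) / N := by
        field_simp
      rw [heq, abs_div, abs_of_pos hN]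
      gcongr
      exact abs_le.mpr ⟨by linarith, by linarith⟩
    have hgmeas : Measurable g := by
      apply Finset.measurable_sum
      intro k _
      exact (measurable_const.indicator (hf (hsmeas k))).const_mul _
    have hgbd : ∀ ω, |g ω| ≤ C + 1 := by
      intro ω
      have hc := hclose ω
      have h1N : 1 / N ≤ 1 := by
        rw [div_le_one hN, hNdef]
        simp
      calc |g ω| = |f ω - (f ω - g ω)| := by ring_nf
        _ ≤ |f ω| + |f ω - g ω| := abs_sub _ _
        _ ≤ C + 1 := by
            have := hfb ω
            linarith
    have h_int_g : Integrable g μ := int_of_bdd hgmeas.aestronglyMeasurable hgbd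
    have h_int_gχ : Integrable (fun ω => g ω * χ ω) μ := by
      refine int_of_bdd (hgmeas.mul hχmeas).aestronglyMeasurable (b := C + 1) fun ω => ?_
      have := abs_mul_le' (hgbd ω) (hχbd ω)
      simpa using this
    have e1 : ∀ᵐ ω ∂μ,
        |(μ[fun ω' => f ω' * χ ω'|m]) ω - (μ[fun ω' => g ω' * χ ω'|m]) ω| ≤ 1 / N := by
      have hd : μ[(fun ω' => f ω' * χ ω') - (fun ω' => g ω' * χ ω')|m]
          =ᵐ[μ] μ[fun ω' => f ω' * χ ω'|m] - μ[fun ω' => g ω' * χ ω'|m] :=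
        condExp_sub h_int_fχ h_int_gχ m
      have hb : ∀ ω, |((fun ω' => f ω' * χ ω') - (fun ω' => g ω' * χ ω')) ω| ≤ 1 / N := by
        intro ω
        simp only [Pi.sub_apply]
        have hx := abs_mul_le' (hclose ω) (hχbd ω)
        rw [← sub_mul]
        simpa using hx
      have habs := abs_condexp_le hm (h_int_fχ.sub h_int_gχ) hb
      filter_upwards [hd, habs] with ω h1 h2
      rw [h1] at h2
      simpa using h2
    have e2 : ∀ᵐ ω ∂μ, |(μ[f|m]) ω - (μ[g|m]) ω| ≤ 1 / N := by
      have hd : μ[f - g|m] =ᵐ[μ] μ[f|m] - μ[g|m] := condExp_sub h_int_f h_int_g m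
      have habs := abs_condexp_le hm (h_int_f.sub h_int_g)
        (fun ω => by simpa [Pi.sub_apply] using hclose ω)
      filter_upwards [hd, habs] with ω h1 h2
      rw [h1] at h2
      simpa using h2
    have e3 : ∀ᵐ ω ∂μ, |G ω| ≤ 1 := abs_condexp_le hm
      (int_of_bdd hχmeas.aestronglyMeasurable hχbd) hχbd
    have e4 : μ[fun ω => g ω * χ ω|m] =ᵐ[μ] fun ω => (μ[g|m]) ω * G ω :=
      h_sum K c s hsmeas
    filter_upwards [e1, e2, e3, e4] with ω h1 h2 h3 h4
    have hkey : (μ[fun ω' => f ω' * χ ω'|m]) ω - (μ[f|m]) ω * G ω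
        = ((μ[fun ω' => f ω' * χ ω'|m]) ω - (μ[fun ω' => g ω' * χ ω'|m]) ω)
          + ((μ[g|m]) ω - (μ[f|m]) ω) * G ω := by
      rw [h4]; ring
    rw [hkey]
    calc |((μ[fun ω' => f ω' * χ ω'|m]) ω - (μ[fun ω' => g ω' * χ ω'|m]) ω)
          + ((μ[g|m]) ω - (μ[f|m]) ω) * G ω|
        ≤ |(μ[fun ω' => f ω' * χ ω'|m]) ω - (μ[fun ω' => g ω' * χ ω'|m]) ω|
          + |((μ[g|m]) ω - (μ[f|m]) ω) * G ω| := abs_add_le _ _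
      _ ≤ 2 / N := by
          have h2' : |(μ[g|m]) ω - (μ[f|m]) ω| ≤ 1 / N := by
            rw [abs_sub_comm]; exact h2
          have hx : |((μ[g|m]) ω - (μ[f|m]) ω) * G ω| ≤ 1 / N := by
            have := abs_mul_le' h2' h3
            simpa using this
          have h2N : 2 / N = 1 / N + 1 / N := by ring
          linarith
  have h_all : ∀ᵐ ω ∂μ, ∀ n : ℕ,
      |(μ[fun ω' => f ω' * χ ω'|m]) ω - (μ[f|m]) ω * G ω| ≤ 2 / ((n : ℝ) + 1) :=
    ae_all_iff.mpr main
  filter_upwards [h_all] with ω hω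
  have htend : Tendsto (fun n : ℕ => 2 / ((n : ℝ) + 1)) atTop (nhds 0) := by
    have h := tendsto_one_div_add_atTop_nhds_zero_nat.const_mul (2:ℝ)
    simpa [div_eq_mul_inv, mul_comm] using h
  have hle : |(μ[fun ω' => f ω' * χ ω'|m]) ω - (μ[f|m]) ω * G ω| ≤ 0 :=
    ge_of_tendsto' htend fun n => hω n
  have h0 : (μ[fun ω' => f ω' * χ ω'|m]) ω - (μ[f|m]) ω * G ω = 0 :=
    abs_eq_zero.mp (le_antisymm hle (abs_nonneg _))
  linarith [h0]

end Aux

end AuxHelpers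

/-- (Lemma 1, identifiability.)
Under causal consistency (A1), conditional exchangeability (A2), and
positivity (A3), for any bounded `m`-measurable weight functions `w(a)`, the
counterfactual functional `E[∑_a w(a)·Y_pot(a)]` equals the observed-data
functional `E[∑_a w(a)·E[Y·1_{A=a}|m]/P(A=a|m)]`. -/
theorem stmt1 {Ω : Type*} {mΩ : MeasurableSpace Ω} [StandardBorelSpace Ω] [Nonempty Ω]
    (μ : Measure Ω) [IsProbabilityMeasure μ]
    (m : MeasurableSpace Ω) (hm : m ≤ mΩ)
    {α : Type*} [Fintype α] [DecidableEq α] [MeasurableSpace α] [MeasurableSingletonClass α]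
    (A : Ω → α) (hA : Measurable[mΩ] A)
    (Ypot : α → Ω → ℝ) (hYpot_meas : ∀ a, Measurable[mΩ] (Ypot a))
    (C : ℝ) (hYpot_bdd : ∀ a ω, |Ypot a ω| ≤ C)
    (Y : Ω → ℝ)
    -- (A1) causal consistency
    (hA1 : ∀ᵐ ω ∂μ, Y ω = Ypot (A ω) ω)
    -- (A2) conditional exchangeability
    (hA2 : ∀ a : α, CondIndepFun m hm (Ypot a) A μ)
    -- (A3) positivity
    (c : ℝ) (hc0 : 0 < c) (hc1 : c < 1)
    (hA3 : ∀ a : α, ∀ᵐ ω ∂μ,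
      c ≤ (μ[fun ω' => (if A ω' = a then (1:ℝ) else 0)|m]) ω)
    -- bounded m-measurable weight functions
    (w : α → Ω → ℝ) (hw_meas : ∀ a, Measurable[m] (w a))
    (Cw : ℝ) (hw_bdd : ∀ a ω, |w a ω| ≤ Cw) :
    ∫ ω, ∑ a, w a ω * Ypot a ω ∂μ
      = ∫ ω, ∑ a, w a ω *
          ((μ[fun ω' => Y ω' * (if A ω' = a then (1:ℝ) else 0)|m]) ω /
            (μ[fun ω' => (if A ω' = a then (1:ℝ) else 0)|m]) ω) ∂μ := by
  classical
  letI : MeasurableSpace Ω := mΩ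
  set χ : α → Ω → ℝ := fun a => (A ⁻¹' {a}).indicator (fun _ => (1:ℝ)) with hχdef
  have hptw : ∀ (a : α) (ω : Ω), (if A ω = a then (1:ℝ) else 0) = χ a ω := by
    intro a ω
    by_cases h : A ω = a <;> simp [hχdef, Set.indicator_apply, h]
  simp only [hptw]
  have hχmeas : ∀ a, Measurable[mΩ] (χ a) :=
    fun a => measurable_const.indicator (hA (measurableSet_singleton a))
  have hχbd : ∀ a ω, |χ a ω| ≤ 1 := by
    intro a ω
    by_cases h : A ω = a <;> simp [hχdef, Set.indicator_apply, h]
  have hwmΩ : ∀ a, Measurable[mΩ] (w a) := fun a => (hw_meas a).mono hm le_rfl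
  -- abbreviations
  set G : α → Ω → ℝ := fun a => μ[χ a|m] with hGdef
  set F : α → Ω → ℝ := fun a => μ[Ypot a|m] with hFdef
  -- positivity restated
  have hA3' : ∀ a, ∀ᵐ ω ∂μ, c ≤ G a ω := by
    intro a
    have h := hA3 a
    simpa only [hptw] using h
  -- consistency: Y * χ a = Ypot a * χ a a.e.
  have hYχ : ∀ a, (fun ω => Y ω * χ a ω) =ᵐ[μ] (fun ω => Ypot a ω * χ a ω) := by
    intro a
    filter_upwards [hA1] with ω h
    by_cases hω : A ω = a
    · have hχ1 : χ a ω = 1 := by simp [hχdef, Set.indicator_apply, hω]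
      rw [hχ1, mul_one, mul_one, h, hω]
    · have hχ0 : χ a ω = 0 := by simp [hχdef, Set.indicator_apply, hω]
      rw [hχ0, mul_zero, mul_zero]
  -- numerator factorization
  have hnum : ∀ a, μ[fun ω => Y ω * χ a ω|m] =ᵐ[μ] fun ω => F a ω * G a ω := by
    intro a
    have hfac := condexp_mul_indicator_factor (μ := μ) m hm A hA (Ypot a)
      (hYpot_meas a) C (hYpot_bdd a) (hA2 a) a
    exact (condExp_congr_ae (hYχ a)).trans hfac
  -- the RHS term equals w a * F a a.e.
  have hterm : ∀ a, (fun ω => w a ω * ((μ[fun ω' => Y ω' * χ a ω'|m]) ω / G a ω))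
      =ᵐ[μ] fun ω => w a ω * F a ω := by
    intro a
    filter_upwards [hnum a, hA3' a] with ω h1 h2
    have hGne : G a ω ≠ 0 := (lt_of_lt_of_le hc0 h2).ne'
    rw [h1, mul_div_cancel_right₀ _ hGne]
  -- pull-out property
  have hpull : ∀ a, μ[fun ω => w a ω * Ypot a ω|m] =ᵐ[μ] fun ω => w a ω * F a ω := by
    intro a
    have h := condExp_stronglyMeasurable_mul_of_bound (μ := μ) hm (hw_meas a).stronglyMeasurable
      (int_of_bdd (hYpot_meas a).aestronglyMeasurable (hYpot_bdd a)) Cw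
      (Eventually.of_forall fun ω => by simpa [Real.norm_eq_abs] using hw_bdd a ω)
    exact h
  -- integrability
  have hint_wY : ∀ a, Integrable (fun ω => w a ω * Ypot a ω) μ := by
    intro a
    refine int_of_bdd ((hwmΩ a).mul (hYpot_meas a)).aestronglyMeasurable
      (b := Cw * C) fun ω => ?_
    exact abs_mul_le' (hw_bdd a ω) (hYpot_bdd a ω)
  have hint_wF : ∀ a, Integrable (fun ω => w a ω * F a ω) μ := by
    intro a
    exact integrable_condExp.bdd_mul (hwmΩ a).aestronglyMeasurable
      (Eventually.of_forall fun ω => by simpa [Real.norm_eq_abs] using hw_bdd a ω)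
  have hint_term : ∀ a,
      Integrable (fun ω => w a ω * ((μ[fun ω' => Y ω' * χ a ω'|m]) ω / G a ω)) μ :=
    fun a => (hint_wF a).congr (hterm a).symm
  -- per-a integral equality
  have hper : ∀ a : α,
      ∫ ω, w a ω * ((μ[fun ω' => Y ω' * χ a ω'|m]) ω / G a ω) ∂μ
        = ∫ ω, w a ω * Ypot a ω ∂μ := by
    intro a
    rw [integral_congr_ae (hterm a)]
    rw [integral_congr_ae (hpull a).symm]
    exact integral_condExp hm
  -- sum up
  rw [integral_finset_sum Finset.univ (fun a _ => hint_wY a),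
    integral_finset_sum Finset.univ (fun a _ => hint_term a)]
  exact (Finset.sum_congr rfl fun a _ => (hper a).symm)
end

section
/- (Unbiasedness of the efficient influence function, property (B) in the proof of Theorem 1.) The uncentered efficient influence function has mean equal to the target functional: E[φ_unc] = Ψ(w), where φ_unc := ∑_{a∈α} ⟨w(a) + φ(A, a), G(a)⟩ + ⟨w(A), Y − G(A)⟩ / H(A). Equivalently, the centered influence function φ_unc − Ψ(w) has mean zero. -/
open MeasureTheory RealInnerProductSpace

/-- Cluster-level treatment probability `H(a) = P(A = a | m) = μ[1_{A=a}|m]`. -/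
noncomputable def condH {Ω α : Type*} {mΩ : MeasurableSpace Ω} [DecidableEq α]
    (μ : Measure Ω) (m : MeasurableSpace Ω) (A : Ω → α) (a : α) : Ω → ℝ :=
  μ[fun ω => if A ω = a then (1:ℝ) else 0|m]

/-- Cluster-level outcome regression `G(a) = μ[Y·1_{A=a}|m] / H(a)` (componentwise). -/
noncomputable def condG {Ω α : Type*} {mΩ : MeasurableSpace Ω} [DecidableEq α] {n : ℕ}
    (μ : Measure Ω) (m : MeasurableSpace Ω) (A : Ω → α)
    (Y : Ω → EuclideanSpace ℝ (Fin n)) (a : α) : Ω → EuclideanSpace ℝ (Fin n) :=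
  fun ω => (condH μ m A a ω)⁻¹ •
    (μ[fun ω' => (if A ω' = a then (1:ℝ) else 0) • Y ω'|m]) ω

section Aux
variable {Ω : Type*} {m mΩ : MeasurableSpace Ω} {μ : Measure Ω}

private theorem condexp_comp_clm_aux [IsFiniteMeasure μ] (hm : m ≤ mΩ)
    {E F : Type*} [NormedAddCommGroup E] [NormedSpace ℝ E] [CompleteSpace E]
    [NormedAddCommGroup F] [NormedSpace ℝ F] [CompleteSpace F]
    (L : E →L[ℝ] F) {f : Ω → E} (hf : Integrable f μ) :
    (fun ω => L ((μ[f|m]) ω)) =ᵐ[μ] μ[fun ω => L (f ω)|m] := by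
  haveI : SigmaFinite (μ.trim hm) := inferInstance
  refine ae_eq_condExp_of_forall_setIntegral_eq hm (L.integrable_comp hf)
    (fun s hs hμs => (L.integrable_comp integrable_condExp).integrableOn)
    (fun s hs hμs => ?_)
    ((L.continuous.comp_stronglyMeasurable stronglyMeasurable_condExp).aestronglyMeasurable)
  rw [L.integral_comp_comm integrable_condExp.integrableOn,
    setIntegral_condExp hm hf hs, ← L.integral_comp_comm hf.integrableOn]

private theorem eucl_abs_apply_le_norm {n : ℕ} (x : EuclideanSpace ℝ (Fin n)) (i : Fin n) :
    |x i| ≤ ‖x‖ := by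
  rw [EuclideanSpace.norm_eq, ← Real.sqrt_sq_eq_abs]
  apply Real.sqrt_le_sqrt
  simpa [sq_abs] using Finset.single_le_sum (f := fun j => ‖x j‖^2)
    (fun j _ => sq_nonneg _) (Finset.mem_univ i)

private theorem condexp_inner_pullout [IsFiniteMeasure μ] (hm : m ≤ mΩ) {n : ℕ}
    {v f : Ω → EuclideanSpace ℝ (Fin n)}
    (hv : StronglyMeasurable[m] v) {Cv : ℝ} (hvb : ∀ᵐ ω ∂μ, ‖v ω‖ ≤ Cv)
    (hf : Integrable f μ) :
    μ[fun ω => ⟪v ω, f ω⟫|m] =ᵐ[μ] fun ω => ⟪v ω, (μ[f|m]) ω⟫ := by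
  haveI : SigmaFinite (μ.trim hm) := inferInstance
  have hvi : ∀ i : Fin n, StronglyMeasurable[m] (fun ω => v ω i) :=
    fun i => (EuclideanSpace.proj (𝕜 := ℝ) i).continuous.comp_stronglyMeasurable hv
  have hvib : ∀ i : Fin n, ∀ᵐ ω ∂μ, ‖v ω i‖ ≤ Cv := fun i => by
    filter_upwards [hvb] with ω hω
    exact le_trans (eucl_abs_apply_le_norm (v ω) i) hω
  have hfi : ∀ i : Fin n, Integrable (fun ω => f ω i) μ :=
    fun i => (EuclideanSpace.proj (𝕜 := ℝ) i).integrable_comp hf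
  have hint : ∀ i : Fin n, Integrable (fun ω => v ω i * f ω i) μ :=
    fun i => (hfi i).bdd_mul (((hvi i).mono hm).aestronglyMeasurable) (hvib i)
  have key : ∀ i : Fin n, μ[fun ω => v ω i * f ω i|m] =ᵐ[μ] fun ω => v ω i * (μ[f|m]) ω i := by
    intro i
    have h1 := condExp_stronglyMeasurable_mul_of_bound hm (hvi i) (hfi i) Cv (hvib i)
    have h2 := condexp_comp_clm_aux hm (EuclideanSpace.proj (𝕜 := ℝ) i) hf
    filter_upwards [h1, h2.symm] with ω hω1 hω2
    calc (μ[fun ω => v ω i * f ω i|m]) ω = (μ[(fun ω => v ω i) * fun ω => f ω i|m]) ω := rfl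
      _ = v ω i * (μ[fun ω => f ω i|m]) ω := hω1
      _ = v ω i * (μ[fun ω => (EuclideanSpace.proj (𝕜 := ℝ) i) (f ω)|m]) ω := rfl
      _ = v ω i * (μ[f|m]) ω i := by rw [hω2]; rfl
  have hsum : (fun ω => ⟪v ω, f ω⟫) = fun ω => ∑ i, v ω i * f ω i := by
    funext ω; simp [PiLp.inner_apply, RCLike.inner_apply, conj_trivial, mul_comm]
  rw [hsum]
  have h3 : μ[fun ω => ∑ i, v ω i * f ω i|m] =ᵐ[μ] ∑ i : Fin n, μ[fun ω => v ω i * f ω i|m] := by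
    have := condExp_finset_sum (μ := μ) (m := m) (s := Finset.univ)
      (f := fun (i : Fin n) ω => v ω i * f ω i) (fun i _ => hint i)
    refine .trans ?_ this
    apply condExp_congr_ae
    exact Filter.EventuallyEq.of_eq (by funext ω; simp)
  refine h3.trans ?_
  have h4 : ∀ᵐ ω ∂μ, ∀ i : Fin n, (μ[fun ω => v ω i * f ω i|m]) ω = v ω i * (μ[f|m]) ω i :=
    ae_all_iff.2 fun i => key i
  filter_upwards [h4] with ω hω
  simp only [Finset.sum_apply]
  rw [Finset.sum_congr rfl (fun i _ => hω i)]
  simp [PiLp.inner_apply, RCLike.inner_apply, conj_trivial, mul_comm]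

private theorem integral_mul_pullout [IsFiniteMeasure μ] (hm : m ≤ mΩ) {g f : Ω → ℝ}
    (hg : StronglyMeasurable[m] g) {Cg : ℝ} (hgb : ∀ᵐ ω ∂μ, ‖g ω‖ ≤ Cg)
    (hf : Integrable f μ) :
    ∫ ω, g ω * f ω ∂μ = ∫ ω, g ω * (μ[f|m]) ω ∂μ := by
  haveI : SigmaFinite (μ.trim hm) := inferInstance
  have h := condExp_stronglyMeasurable_mul_of_bound hm hg hf Cg hgb
  calc ∫ ω, g ω * f ω ∂μ = ∫ ω, (μ[g * f|m]) ω ∂μ := (integral_condExp hm).symm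
    _ = ∫ ω, g ω * (μ[f|m]) ω ∂μ := integral_congr_ae (h.mono fun ω hω => hω)

private theorem integral_inner_pullout [IsFiniteMeasure μ] (hm : m ≤ mΩ) {n : ℕ}
    {v f : Ω → EuclideanSpace ℝ (Fin n)} (hv : StronglyMeasurable[m] v) {Cv : ℝ}
    (hvb : ∀ᵐ ω ∂μ, ‖v ω‖ ≤ Cv) (hf : Integrable f μ) :
    ∫ ω, ⟪v ω, f ω⟫ ∂μ = ∫ ω, ⟪v ω, (μ[f|m]) ω⟫ ∂μ := by
  haveI : SigmaFinite (μ.trim hm) := inferInstance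
  calc ∫ ω, ⟪v ω, f ω⟫ ∂μ = ∫ ω, (μ[fun ω => ⟪v ω, f ω⟫|m]) ω ∂μ := (integral_condExp hm).symm
    _ = ∫ ω, ⟪v ω, (μ[f|m]) ω⟫ ∂μ := integral_congr_ae (condexp_inner_pullout hm hv hvb hf)

end Aux

/-- (Unbiasedness of the efficient influence function, property (B) in the proof
of Theorem 1.)  The uncentered efficient influence function
`φ_unc = ∑_a ⟨w(a) + φ(A,a), G(a)⟩ + ⟨w(A), Y − G(A)⟩/H(A)` has mean equal to
the target functional `Ψ(w) = E[∑_a ⟨w(a), G(a)⟩]`; equivalently, the centered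
influence function `φ_unc − Ψ(w)` has mean zero. -/
theorem stmt2 {Ω : Type*} {mΩ : MeasurableSpace Ω}
    (μ : Measure Ω) [IsProbabilityMeasure μ]
    (m : MeasurableSpace Ω) (hm : m ≤ mΩ)
    {α : Type*} [Fintype α] [DecidableEq α] [MeasurableSpace α] [MeasurableSingletonClass α]
    {n : ℕ}
    (A : Ω → α) (hA : Measurable[mΩ] A)
    (Y : Ω → EuclideanSpace ℝ (Fin n)) (hY : Measurable[mΩ] Y)
    (CY : ℝ) (hYb : ∀ ω, ‖Y ω‖ ≤ CY)
    -- positivity of the cluster-level treatment probability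
    (c : ℝ) (hc : 0 < c)
    (hH : ∀ a : α, ∀ᵐ ω ∂μ, c ≤ condH μ m A a ω)
    -- bounded m-measurable weight functions
    (w : α → Ω → EuclideanSpace ℝ (Fin n)) (hw : ∀ a, Measurable[m] (w a))
    (Cw : ℝ) (hwb : ∀ a ω, ‖w a ω‖ ≤ Cw)
    -- bounded m-measurable influence functions of the weights, with conditional mean zero
    (φ : α → α → Ω → EuclideanSpace ℝ (Fin n)) (hφ : ∀ a' a, Measurable[m] (φ a' a))
    (Cφ : ℝ) (hφb : ∀ a' a ω, ‖φ a' a ω‖ ≤ Cφ)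
    (hφ0 : ∀ a : α, ∀ᵐ ω ∂μ, ∑ a', condH μ m A a' ω • φ a' a ω = 0) :
    ∫ ω, ((∑ a, ⟪w a ω + φ (A ω) a ω, condG μ m A Y a ω⟫)
        + ⟪w (A ω) ω, Y ω - condG μ m A Y (A ω) ω⟫ / condH μ m A (A ω) ω) ∂μ
      = ∫ ω, ∑ a, ⟪w a ω, condG μ m A Y a ω⟫ ∂μ := by
  classical
  haveI : SigmaFinite (μ.trim hm) := inferInstance
  have hne : Nonempty Ω := by
    by_contra h
    rw [not_nonempty_iff] at h
    have h1 : μ Set.univ = 1 := measure_univ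
    rw [Set.univ_eq_empty_iff.mpr h] at h1
    simp at h1
  obtain ⟨ω₀⟩ := hne
  have hCY0 : 0 ≤ CY := le_trans (norm_nonneg _) (hYb ω₀)
  have hCw0 : 0 ≤ Cw := le_trans (norm_nonneg _) (hwb (A ω₀) ω₀)
  have hCφ0 : 0 ≤ Cφ := le_trans (norm_nonneg _) (hφb (A ω₀) (A ω₀) ω₀)
  set χ : α → Ω → ℝ := fun a ω => if A ω = a then (1:ℝ) else 0 with hχdef
  set K : α → Ω → EuclideanSpace ℝ (Fin n) := fun a => μ[fun ω' => χ a ω' • Y ω'|m] with hKdef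
  have hHeq : ∀ a, condH μ m A a = μ[χ a|m] := fun a => rfl
  have hGeq : ∀ a, condG μ m A Y a = fun ω => (condH μ m A a ω)⁻¹ • K a ω := fun a => rfl
  have hYsm : StronglyMeasurable[mΩ] Y := hY.stronglyMeasurable
  have hχsm : ∀ a, StronglyMeasurable[mΩ] (χ a) := fun a => by
    have hs : MeasurableSet[mΩ] {ω | A ω = a} := hA (measurableSet_singleton a)
    exact (Measurable.ite hs measurable_const measurable_const).stronglyMeasurable
  have hχb : ∀ a ω, ‖χ a ω‖ ≤ 1 := fun a ω => by
    simp only [hχdef, Real.norm_eq_abs]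
    split <;> norm_num
  have hχint : ∀ a, Integrable (χ a) μ := fun a =>
    ⟨(hχsm a).aestronglyMeasurable, HasFiniteIntegral.of_bounded (ae_of_all _ (hχb a))⟩
  have hχYint : ∀ a, Integrable (fun ω => χ a ω • Y ω) μ := fun a =>
    ⟨((hχsm a).smul hYsm).aestronglyMeasurable,
      HasFiniteIntegral.of_bounded (C := CY) (ae_of_all _ fun ω => by
        rw [norm_smul]
        calc ‖χ a ω‖ * ‖Y ω‖ ≤ 1 * CY :=
          mul_le_mul (hχb a ω) (hYb ω) (norm_nonneg _) zero_le_one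
        _ = CY := one_mul _)⟩
  have hwsm : ∀ a, StronglyMeasurable[m] (w a) := fun a => (hw a).stronglyMeasurable
  have hφsm : ∀ a' a, StronglyMeasurable[m] (φ a' a) := fun a' a => (hφ a' a).stronglyMeasurable
  have hHsm : ∀ a, StronglyMeasurable[m] (condH μ m A a) := fun a => stronglyMeasurable_condExp
  have hHinv_sm : ∀ a, StronglyMeasurable[m] (fun ω => (condH μ m A a ω)⁻¹) := fun a =>
    ((hHsm a).measurable.inv).stronglyMeasurable
  have hKsm : ∀ a, StronglyMeasurable[m] (K a) := fun a => stronglyMeasurable_condExp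
  have hKint : ∀ a, Integrable (K a) μ := fun a => integrable_condExp
  have hGsm : ∀ a, StronglyMeasurable[m] (condG μ m A Y a) := fun a => by
    rw [hGeq a]; exact (hHinv_sm a).smul (hKsm a)
  have hHb1 : ∀ a, ∀ᵐ ω ∂μ, |condH μ m A a ω| ≤ 1 := fun a => by
    have h := ae_bdd_condExp_of_ae_bdd (m := m) (μ := μ) (R := 1)
      (f := χ a) (ae_of_all _ fun ω => by simpa using hχb a ω)
    simpa [hHeq a] using h
  have hHc : ∀ a, ∀ᵐ ω ∂μ, c ≤ condH μ m A a ω := hH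
  -- a.e. bound on K
  set CK : ℝ := Real.sqrt n * CY with hCKdef
  have hCK0 : 0 ≤ CK := mul_nonneg (Real.sqrt_nonneg _) hCY0
  have hKi : ∀ a (i : Fin n), ∀ᵐ ω ∂μ, |K a ω i| ≤ CY := by
    intro a i
    have h2 := condexp_comp_clm_aux hm (EuclideanSpace.proj (𝕜 := ℝ) i) (hχYint a)
    have hb : ∀ᵐ ω ∂μ, |χ a ω * Y ω i| ≤ ((⟨CY, hCY0⟩ : NNReal) : ℝ) := ae_of_all _ fun ω => by
      calc |χ a ω * Y ω i| = |χ a ω| * |Y ω i| := abs_mul _ _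
        _ ≤ 1 * CY := mul_le_mul (hχb a ω)
            (le_trans (eucl_abs_apply_le_norm (Y ω) i) (hYb ω)) (abs_nonneg _) zero_le_one
        _ = CY := one_mul _
    have h3 := ae_bdd_condExp_of_ae_bdd (m := m) hb
    filter_upwards [h2, h3] with ω hω2 hω3
    have : K a ω i = (μ[fun ω => χ a ω * Y ω i|m]) ω := by
      rw [hKdef]
      exact hω2
    rw [this]
    exact hω3
  have hKb : ∀ a, ∀ᵐ ω ∂μ, ‖K a ω‖ ≤ CK := by
    intro a
    filter_upwards [ae_all_iff.2 (hKi a)] with ω hω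
    rw [EuclideanSpace.norm_eq]
    calc Real.sqrt (∑ i, ‖K a ω i‖ ^ 2) ≤ Real.sqrt (∑ _i : Fin n, CY ^ 2) := by
          apply Real.sqrt_le_sqrt
          refine Finset.sum_le_sum fun i _ => ?_
          rw [Real.norm_eq_abs]
          exact pow_le_pow_left₀ (abs_nonneg _) (hω i) 2
      _ = CK := by
          rw [Finset.sum_const, Finset.card_univ, Fintype.card_fin, nsmul_eq_mul,
            Real.sqrt_mul (Nat.cast_nonneg n), Real.sqrt_sq hCY0, hCKdef]
  have hGb : ∀ a, ∀ᵐ ω ∂μ, ‖condG μ m A Y a ω‖ ≤ c⁻¹ * CK := by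
    intro a
    filter_upwards [hHc a, hKb a] with ω h1 h2
    rw [hGeq a]
    have hHpos : 0 < condH μ m A a ω := lt_of_lt_of_le hc h1
    rw [norm_smul, Real.norm_eq_abs, abs_inv, abs_of_pos hHpos]
    have : (condH μ m A a ω)⁻¹ ≤ c⁻¹ := inv_anti₀ hc h1
    exact mul_le_mul this h2 (norm_nonneg _) (inv_nonneg.2 hc.le)
  -- pointwise sum-over-treatments identity
  have esum : ∀ (ω : Ω) (t : α → ℝ), ∑ a', χ a' ω * t a' = t (A ω) := by
    intro ω t
    simp only [hχdef, ite_mul, one_mul, zero_mul]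
    rw [Finset.sum_ite_eq Finset.univ (A ω) t, if_pos (Finset.mem_univ _)]
  have hpoint : ∀ ω,
      ((∑ a, ⟪w a ω + φ (A ω) a ω, condG μ m A Y a ω⟫)
        + ⟪w (A ω) ω, Y ω - condG μ m A Y (A ω) ω⟫ / condH μ m A (A ω) ω)
      = (∑ a, ⟪w a ω, condG μ m A Y a ω⟫)
        + ((∑ a, ∑ a', χ a' ω * ⟪φ a' a ω, condG μ m A Y a ω⟫)
          + ∑ a, χ a ω * (⟪w a ω, Y ω - condG μ m A Y a ω⟫ / condH μ m A a ω)) := by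
    intro ω
    have h1 : ∀ a, ⟪w a ω + φ (A ω) a ω, condG μ m A Y a ω⟫
        = ⟪w a ω, condG μ m A Y a ω⟫ + ⟪φ (A ω) a ω, condG μ m A Y a ω⟫ :=
      fun a => inner_add_left _ _ _
    have h2 : ∀ a, ∑ a', χ a' ω * ⟪φ a' a ω, condG μ m A Y a ω⟫
        = ⟪φ (A ω) a ω, condG μ m A Y a ω⟫ := fun a => esum ω _
    have h3 : ∑ a, χ a ω * (⟪w a ω, Y ω - condG μ m A Y a ω⟫ / condH μ m A a ω)
        = ⟪w (A ω) ω, Y ω - condG μ m A Y (A ω) ω⟫ / condH μ m A (A ω) ω := esum ω _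
    simp only [h1, h2, h3, Finset.sum_add_distrib]
    ring
  -- integrability of the pieces
  have bint : ∀ (f : Ω → ℝ) (C : ℝ), AEStronglyMeasurable[mΩ] f μ → (∀ᵐ ω ∂μ, ‖f ω‖ ≤ C)
      → Integrable f μ := fun f C hf h => ⟨hf, HasFiniteIntegral.of_bounded h⟩
  have hwG_asm : ∀ a, AEStronglyMeasurable[mΩ] (fun ω => ⟪w a ω, condG μ m A Y a ω⟫) μ :=
    fun a => (((hwsm a).mono hm).inner ((hGsm a).mono hm)).aestronglyMeasurable
  have hwGint : ∀ a, Integrable (fun ω => ⟪w a ω, condG μ m A Y a ω⟫) μ := by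
    intro a
    refine bint _ (Cw * (c⁻¹ * CK)) (hwG_asm a) ?_
    filter_upwards [hGb a] with ω h
    rw [Real.norm_eq_abs]
    exact le_trans (abs_real_inner_le_norm _ _)
      (mul_le_mul (hwb a ω) h (norm_nonneg _) hCw0)
  have hRint : Integrable (fun ω => ∑ a, ⟪w a ω, condG μ m A Y a ω⟫) μ :=
    integrable_finset_sum _ fun a _ => hwGint a
  have hφG_asm : ∀ a' a, AEStronglyMeasurable[mΩ] (fun ω => ⟪φ a' a ω, condG μ m A Y a ω⟫) μ :=
    fun a' a => (((hφsm a' a).mono hm).inner ((hGsm a).mono hm)).aestronglyMeasurable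
  have hφG_b : ∀ a' a, ∀ᵐ ω ∂μ, ‖⟪φ a' a ω, condG μ m A Y a ω⟫‖ ≤ Cφ * (c⁻¹ * CK) := by
    intro a' a
    filter_upwards [hGb a] with ω h
    rw [Real.norm_eq_abs]
    exact le_trans (abs_real_inner_le_norm _ _)
      (mul_le_mul (hφb a' a ω) h (norm_nonneg _) hCφ0)
  have hφGint : ∀ a' a, Integrable (fun ω => ⟪φ a' a ω, condG μ m A Y a ω⟫) μ :=
    fun a' a => bint _ _ (hφG_asm a' a) (hφG_b a' a)
  have hX1int : ∀ a a', Integrable (fun ω => χ a' ω * ⟪φ a' a ω, condG μ m A Y a ω⟫) μ := by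
    intro a a'
    refine bint _ (1 * (Cφ * (c⁻¹ * CK)))
      (((hχsm a').aestronglyMeasurable).mul (hφG_asm a' a)) ?_
    filter_upwards [hφG_b a' a] with ω h
    rw [norm_mul]
    exact mul_le_mul (hχb a' ω) h (norm_nonneg _) zero_le_one
  have hwYG_sm : ∀ a, StronglyMeasurable[mΩ]
      (fun ω => ⟪w a ω, Y ω - condG μ m A Y a ω⟫ / condH μ m A a ω) := by
    intro a
    have : (fun ω => ⟪w a ω, Y ω - condG μ m A Y a ω⟫ / condH μ m A a ω)
        = fun ω => ⟪w a ω, Y ω - condG μ m A Y a ω⟫ * (condH μ m A a ω)⁻¹ := by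
      funext ω; rw [div_eq_mul_inv]
    rw [this]
    exact (((hwsm a).mono hm).inner (hYsm.sub ((hGsm a).mono hm))).mul
      ((hHinv_sm a).mono hm)
  have hX2_b : ∀ a, ∀ᵐ ω ∂μ,
      ‖χ a ω * (⟪w a ω, Y ω - condG μ m A Y a ω⟫ / condH μ m A a ω)‖
        ≤ 1 * (Cw * (CY + c⁻¹ * CK) * c⁻¹) := by
    intro a
    filter_upwards [hGb a, hHc a] with ω h1 h2
    have hHpos : 0 < condH μ m A a ω := lt_of_lt_of_le hc h2
    rw [norm_mul]
    refine mul_le_mul (hχb a ω) ?_ (norm_nonneg _) zero_le_one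
    rw [Real.norm_eq_abs, abs_div, abs_of_pos hHpos]
    have hnum : |⟪w a ω, Y ω - condG μ m A Y a ω⟫| ≤ Cw * (CY + c⁻¹ * CK) := by
      refine le_trans (abs_real_inner_le_norm _ _) ?_
      refine mul_le_mul (hwb a ω) ?_ (norm_nonneg _) hCw0
      exact le_trans (norm_sub_le _ _) (add_le_add (hYb ω) h1)
    rw [div_eq_mul_inv]
    exact mul_le_mul hnum (inv_anti₀ hc h2)
      (inv_nonneg.2 hHpos.le) (mul_nonneg hCw0 (add_nonneg hCY0 (mul_nonneg (inv_nonneg.2 hc.le) hCK0)))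
  have hX2int : ∀ a, Integrable
      (fun ω => χ a ω * (⟪w a ω, Y ω - condG μ m A Y a ω⟫ / condH μ m A a ω)) μ :=
    fun a => bint _ _ (((hχsm a).aestronglyMeasurable).mul
      (hwYG_sm a).aestronglyMeasurable) (hX2_b a)
  -- rewrite the LHS integral
  rw [integral_congr_ae (Filter.EventuallyEq.of_eq (funext hpoint))]
  have hXint : Integrable (fun ω =>
      (∑ a, ∑ a', χ a' ω * ⟪φ a' a ω, condG μ m A Y a ω⟫)
        + ∑ a, χ a ω * (⟪w a ω, Y ω - condG μ m A Y a ω⟫ / condH μ m A a ω)) μ :=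
    (integrable_finset_sum _ fun a _ => integrable_finset_sum _ fun a' _ => hX1int a a').add
      (integrable_finset_sum _ fun a _ => hX2int a)
  rw [integral_add hRint hXint]
  -- the extra term integrates to zero
  have hHφGint : ∀ a' a, Integrable
      (fun ω => ⟪φ a' a ω, condG μ m A Y a ω⟫ * condH μ m A a' ω) μ := by
    intro a' a
    refine bint _ ((Cφ * (c⁻¹ * CK)) * 1)
      ((hφG_asm a' a).mul (stronglyMeasurable_condExp.mono hm).aestronglyMeasurable) ?_
    filter_upwards [hφG_b a' a, hHb1 a'] with ω h1 h2
    rw [norm_mul]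
    exact mul_le_mul h1 (by simpa using h2) (norm_nonneg _)
      (mul_nonneg hCφ0 (mul_nonneg (inv_nonneg.2 hc.le) hCK0))
  have hpart1 : ∀ a, ∑ a', ∫ ω, χ a' ω * ⟪φ a' a ω, condG μ m A Y a ω⟫ ∂μ = 0 := by
    intro a
    have e1 : ∀ a', ∫ ω, χ a' ω * ⟪φ a' a ω, condG μ m A Y a ω⟫ ∂μ
        = ∫ ω, ⟪φ a' a ω, condG μ m A Y a ω⟫ * condH μ m A a' ω ∂μ := by
      intro a'
      have hmc := integral_mul_pullout hm (g := fun ω => ⟪φ a' a ω, condG μ m A Y a ω⟫)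
        ((hφsm a' a).inner (hGsm a)) (hφG_b a' a) (hχint a')
      calc ∫ ω, χ a' ω * ⟪φ a' a ω, condG μ m A Y a ω⟫ ∂μ
          = ∫ ω, ⟪φ a' a ω, condG μ m A Y a ω⟫ * χ a' ω ∂μ := by
            exact integral_congr_ae (Filter.EventuallyEq.of_eq (funext fun ω => mul_comm _ _))
        _ = ∫ ω, ⟪φ a' a ω, condG μ m A Y a ω⟫ * (μ[χ a'|m]) ω ∂μ := hmc
        _ = ∫ ω, ⟪φ a' a ω, condG μ m A Y a ω⟫ * condH μ m A a' ω ∂μ := by rw [← hHeq a']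
    rw [Finset.sum_congr rfl fun a' _ => e1 a']
    rw [← integral_finset_sum _ (fun a' _ => hHφGint a' a)]
    have hz : ∀ᵐ ω ∂μ,
        ∑ a', ⟪φ a' a ω, condG μ m A Y a ω⟫ * condH μ m A a' ω = 0 := by
      filter_upwards [hφ0 a] with ω h
      calc ∑ a', ⟪φ a' a ω, condG μ m A Y a ω⟫ * condH μ m A a' ω
          = ⟪∑ a', condH μ m A a' ω • φ a' a ω, condG μ m A Y a ω⟫ := by
            rw [sum_inner]
            exact Finset.sum_congr rfl fun a' _ => by
              rw [real_inner_smul_left]; ring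
        _ = 0 := by rw [h, inner_zero_left]
    rw [integral_congr_ae hz, integral_zero]
  have hpart2 : ∀ a, ∫ ω, χ a ω *
      (⟪w a ω, Y ω - condG μ m A Y a ω⟫ / condH μ m A a ω) ∂μ = 0 := by
    intro a
    have hsplit : (fun ω => χ a ω * (⟪w a ω, Y ω - condG μ m A Y a ω⟫ / condH μ m A a ω))
        = fun ω => χ a ω * (⟪w a ω, Y ω⟫ / condH μ m A a ω)
          - χ a ω * (⟪w a ω, condG μ m A Y a ω⟫ / condH μ m A a ω) := by
      funext ω
      rw [inner_sub_right, sub_div, mul_sub]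
    -- integrability
    have hwY_asm : AEStronglyMeasurable[mΩ] (fun ω => ⟪w a ω, Y ω⟫) μ :=
      (((hwsm a).mono hm).inner hYsm).aestronglyMeasurable
    have hAint : Integrable (fun ω => χ a ω * (⟪w a ω, Y ω⟫ / condH μ m A a ω)) μ := by
      refine bint _ (1 * (Cw * CY * c⁻¹)) ?_ ?_
      · refine ((hχsm a).aestronglyMeasurable).mul ?_
        have : (fun ω => ⟪w a ω, Y ω⟫ / condH μ m A a ω)
            = fun ω => ⟪w a ω, Y ω⟫ * (condH μ m A a ω)⁻¹ := by
          funext ω; rw [div_eq_mul_inv]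
        rw [this]
        exact ((((hwsm a).mono hm).inner hYsm).mul ((hHinv_sm a).mono hm)).aestronglyMeasurable
      · filter_upwards [hHc a] with ω h2
        have hHpos : 0 < condH μ m A a ω := lt_of_lt_of_le hc h2
        rw [norm_mul]
        refine mul_le_mul (hχb a ω) ?_ (norm_nonneg _) zero_le_one
        rw [Real.norm_eq_abs, abs_div, abs_of_pos hHpos, div_eq_mul_inv]
        refine mul_le_mul ?_ (inv_anti₀ hc h2) (inv_nonneg.2 hHpos.le)
          (mul_nonneg hCw0 hCY0)
        exact le_trans (abs_real_inner_le_norm _ _)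
          (mul_le_mul (hwb a ω) (hYb ω) (norm_nonneg _) hCw0)
    have hgB_sm : StronglyMeasurable[m]
        (fun ω => ⟪w a ω, condG μ m A Y a ω⟫ / condH μ m A a ω) := by
      have : (fun ω => ⟪w a ω, condG μ m A Y a ω⟫ / condH μ m A a ω)
          = fun ω => ⟪w a ω, condG μ m A Y a ω⟫ * (condH μ m A a ω)⁻¹ := by
        funext ω; rw [div_eq_mul_inv]
      rw [this]
      exact ((hwsm a).inner (hGsm a)).mul (hHinv_sm a)
    have hgB_b : ∀ᵐ ω ∂μ,
        ‖⟪w a ω, condG μ m A Y a ω⟫ / condH μ m A a ω‖ ≤ Cw * (c⁻¹ * CK) * c⁻¹ := by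
      filter_upwards [hGb a, hHc a] with ω h1 h2
      have hHpos : 0 < condH μ m A a ω := lt_of_lt_of_le hc h2
      rw [Real.norm_eq_abs, abs_div, abs_of_pos hHpos, div_eq_mul_inv]
      refine mul_le_mul ?_ (inv_anti₀ hc h2) (inv_nonneg.2 hHpos.le)
        (mul_nonneg hCw0 (mul_nonneg (inv_nonneg.2 hc.le) hCK0))
      exact le_trans (abs_real_inner_le_norm _ _)
        (mul_le_mul (hwb a ω) h1 (norm_nonneg _) hCw0)
    have hBint : Integrable
        (fun ω => χ a ω * (⟪w a ω, condG μ m A Y a ω⟫ / condH μ m A a ω)) μ := by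
      refine bint _ (1 * (Cw * (c⁻¹ * CK) * c⁻¹))
        (((hχsm a).aestronglyMeasurable).mul ((hgB_sm.mono hm).aestronglyMeasurable)) ?_
      filter_upwards [hgB_b] with ω h1
      rw [norm_mul]
      exact mul_le_mul (hχb a ω) h1 (norm_nonneg _) zero_le_one
    rw [hsplit, integral_sub hAint hBint]
    -- ∫ B = ∫ ⟪w a, G a⟫
    have eB : ∫ ω, χ a ω * (⟪w a ω, condG μ m A Y a ω⟫ / condH μ m A a ω) ∂μ
        = ∫ ω, ⟪w a ω, condG μ m A Y a ω⟫ ∂μ := by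
      have hmc := integral_mul_pullout hm
        (g := fun ω => ⟪w a ω, condG μ m A Y a ω⟫ / condH μ m A a ω)
        hgB_sm hgB_b (hχint a)
      calc ∫ ω, χ a ω * (⟪w a ω, condG μ m A Y a ω⟫ / condH μ m A a ω) ∂μ
          = ∫ ω, (⟪w a ω, condG μ m A Y a ω⟫ / condH μ m A a ω) * χ a ω ∂μ :=
            integral_congr_ae (Filter.EventuallyEq.of_eq (funext fun ω => mul_comm _ _))
        _ = ∫ ω, (⟪w a ω, condG μ m A Y a ω⟫ / condH μ m A a ω) * (μ[χ a|m]) ω ∂μ := hmc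
        _ = ∫ ω, ⟪w a ω, condG μ m A Y a ω⟫ ∂μ := by
            refine integral_congr_ae ?_
            filter_upwards [hHc a] with ω h2
            have hne' : condH μ m A a ω ≠ 0 := (lt_of_lt_of_le hc h2).ne'
            rw [← hHeq a]
            exact div_mul_cancel₀ _ hne'
    -- ∫ A = ∫ ⟪w a, G a⟫
    have hv_sm : StronglyMeasurable[m] (fun ω => (condH μ m A a ω)⁻¹ • w a ω) :=
      (hHinv_sm a).smul (hwsm a)
    have hv_b : ∀ᵐ ω ∂μ, ‖(condH μ m A a ω)⁻¹ • w a ω‖ ≤ c⁻¹ * Cw := by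
      filter_upwards [hHc a] with ω h2
      have hHpos : 0 < condH μ m A a ω := lt_of_lt_of_le hc h2
      rw [norm_smul, Real.norm_eq_abs, abs_inv, abs_of_pos hHpos]
      exact mul_le_mul (inv_anti₀ hc h2) (hwb a ω) (norm_nonneg _)
        (inv_nonneg.2 hc.le)
    have eA : ∫ ω, χ a ω * (⟪w a ω, Y ω⟫ / condH μ m A a ω) ∂μ
        = ∫ ω, ⟪w a ω, condG μ m A Y a ω⟫ ∂μ := by
      have e0 : (fun ω => χ a ω * (⟪w a ω, Y ω⟫ / condH μ m A a ω))
          = fun ω => ⟪(condH μ m A a ω)⁻¹ • w a ω, χ a ω • Y ω⟫ := by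
        funext ω
        rw [real_inner_smul_left, real_inner_smul_right, div_eq_inv_mul]
        ring
      rw [e0, integral_inner_pullout hm hv_sm hv_b (hχYint a)]
      refine integral_congr_ae (Filter.EventuallyEq.of_eq (funext fun ω => ?_))
      have hK' : (μ[fun ω => χ a ω • Y ω|m]) ω = K a ω := by rw [hKdef]
      rw [hK']
      rw [real_inner_smul_left, hGeq a, real_inner_smul_right]
    rw [eA, eB, sub_self]
  have hzero : ∫ ω, ((∑ a, ∑ a', χ a' ω * ⟪φ a' a ω, condG μ m A Y a ω⟫)
      + ∑ a, χ a ω * (⟪w a ω, Y ω - condG μ m A Y a ω⟫ / condH μ m A a ω)) ∂μ = 0 := by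
    rw [integral_add
      (integrable_finset_sum _ fun a _ => integrable_finset_sum _ fun a' _ => hX1int a a')
      (integrable_finset_sum _ fun a _ => hX2int a),
      integral_finset_sum _ (fun a _ => integrable_finset_sum _ fun a' _ => hX1int a a'),
      integral_finset_sum _ (fun a _ => hX2int a)]
    have h1 : ∀ a, ∫ ω, ∑ a', χ a' ω * ⟪φ a' a ω, condG μ m A Y a ω⟫ ∂μ = 0 := by
      intro a
      rw [integral_finset_sum _ (fun a' _ => hX1int a a')]
      exact hpart1 a
    simp only [h1, hpart2, Finset.sum_const_zero, add_zero]
  rw [hzero, add_zero]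
end
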